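/- For all ω > 0 and η > 0, the Shiha hazard rate tends to ω at infinity: lim_{y → ∞} h(y; ω, η) = ω. -/

import Mathlib

open Real Filter

noncomputable def shihaHazard (ω η y : ℝ) : ℝ :=
  ω * (ω + (2 * η + 8 * ω * η * y) * Real.exp (-ω * y))
    / (ω + (3 * η + 4 * ω * η * y) * Real.exp (-ω * y))

lemma aux_mul_exp (b : ℝ) (hb : 0 < b) :
    Tendsto (fun y : ℝ => y * Real.exp (-b * y)) atTop (nhds 0) := by
  have h := tendsto_rpow_mul_exp_neg_mul_atTop_nhds_zero 1 b hb
  refine h.congr' ?_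
  filter_upwards [eventually_gt_atTop 0] with y hy
  rw [Real.rpow_one]

lemma aux_affine (b c d : ℝ) (hb : 0 < b) :
    Tendsto (fun y : ℝ => (c + d * y) * Real.exp (-b * y)) atTop (nhds 0) := by
  have h1 : Tendsto (fun y : ℝ => Real.exp (-b * y)) atTop (nhds 0) := by
    have hb' : Tendsto (fun y : ℝ => b * y) atTop atTop :=
      tendsto_id.const_mul_atTop hb
    have h := Real.tendsto_exp_neg_atTop_nhds_zero.comp hb'
    simpa only [Function.comp_def, neg_mul] using h
  have h2 := aux_mul_exp b hb
  have := (h1.const_mul c).add (h2.const_mul d)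
  simpa [mul_add, mul_assoc, mul_comm, mul_left_comm, add_mul] using this

theorem shiha_hazard_limit_at_infinity (ω η : ℝ) (hω : 0 < ω) (hη : 0 < η) :
    Filter.Tendsto (shihaHazard ω η) Filter.atTop (nhds ω) := by
  have hnum : Tendsto (fun y => ω * (ω + (2 * η + 8 * ω * η * y) * Real.exp (-ω * y)))
      atTop (nhds (ω * (ω + 0))) := by
    exact ((tendsto_const_nhds.add (aux_affine ω (2 * η) (8 * ω * η) hω))).const_mul ω
  have hden : Tendsto (fun y => ω + (3 * η + 4 * ω * η * y) * Real.exp (-ω * y))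
      atTop (nhds (ω + 0)) :=
    tendsto_const_nhds.add (aux_affine ω (3 * η) (4 * ω * η) hω)
  have h := hnum.div hden (by simp [hω.ne'])
  rw [add_zero, mul_div_assoc, div_self hω.ne', mul_one] at h
  refine h.congr fun y => ?_
  simp [shihaHazard, neg_mul, Pi.div_apply]
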